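/- arXiv:2512.05095 — 2 statements merged into one kernel-verified Lean document; each statement's English description precedes it below -/
import Mathlib

section
/- Let U be a free ℤ₂-module of rank 2, and let A, B ⊆ U be submodules each free of rank 1 with A ∩ B = {0} and such that A + B is of finite index (open) in U. Let β be a ℤ₂-module automorphism of U such that β(B) = B and (β - id)² = 0 in End(U). If β preserves some finite-index submodule of A (i.e., there exists a nonzero submodule A' ⊆ A with β(A') = A'), then β is the identity automorphism of U. -/
theorem stmt_4 (U : Type*) [AddCommGroup U] [Module ℤ_[2] U]
    [Module.Free ℤ_[2] U] [Module.Finite ℤ_[2] U]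
    (hrk : Module.finrank ℤ_[2] U = 2)
    (a c : U) (ha : a ≠ 0) (hc : c ≠ 0)
    (A B : Submodule ℤ_[2] U)
    (hA : A = Submodule.span ℤ_[2] {a}) (hB : B = Submodule.span ℤ_[2] {c})
    (hAB : A ⊓ B = ⊥) (hfin : Finite (U ⧸ (A ⊔ B)))
    (β : U ≃ₗ[ℤ_[2]] U)
    (hβB : B.map (β : U →ₗ[ℤ_[2]] U) = B)
    (hsq : ((β : Module.End ℤ_[2] U) - 1) ^ 2 = 0)
    (hstab : ∃ A' : Submodule ℤ_[2] U, A' ≤ A ∧ A' ≠ ⊥ ∧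
      A'.map (β : U →ₗ[ℤ_[2]] U) = A') :
    β = 1 := by
  set N : Module.End ℤ_[2] U := (β : Module.End ℤ_[2] U) - 1 with hN
  have hNapp : ∀ x : U, N x = β x - x := fun x => rfl
  have hN2 : ∀ x : U, N (N x) = 0 := by
    intro x
    have := congrArg (fun f : Module.End ℤ_[2] U => f x) hsq
    simpa [pow_two] using this
  -- N c = 0
  have hβc : β c ∈ B := by
    rw [← hβB]
    exact Submodule.mem_map_of_mem (by rw [hB]; exact Submodule.mem_span_singleton_self c)
  obtain ⟨u, hu⟩ : ∃ u : ℤ_[2], u • c = β c := by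
    rw [hB] at hβc; exact Submodule.mem_span_singleton.mp hβc
  have hNc : N c = (u - 1) • c := by
    rw [hNapp, ← hu, sub_smul, one_smul]
  have hNc0 : N c = 0 := by
    have h2 : (u - 1) • ((u - 1) • c) = 0 := by
      have := hN2 c
      rw [hNc, map_smul, hNc] at this
      exact this
    rw [smul_smul] at h2
    rcases smul_eq_zero.mp h2 with h | h
    · rcases mul_eq_zero.mp h with h' | h' <;>
        simp [hNc, h', hc]
    · exact absurd h hc
  -- N a = 0
  obtain ⟨A', hA'le, hA'ne, hA'map⟩ := hstab
  obtain ⟨x, hxA', hx0⟩ := Submodule.exists_mem_ne_zero_of_ne_bot hA'ne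
  obtain ⟨t, ht⟩ : ∃ t : ℤ_[2], t • a = x := by
    have := hA'le hxA'
    rw [hA] at this; exact Submodule.mem_span_singleton.mp this
  have ht0 : t ≠ 0 := by rintro rfl; simp at ht; exact hx0 ht.symm
  obtain ⟨s, hs⟩ : ∃ s : ℤ_[2], s • a = β x := by
    have hβx : β x ∈ A := hA'le (hA'map ▸ Submodule.mem_map_of_mem hxA')
    rw [hA] at hβx; exact Submodule.mem_span_singleton.mp hβx
  have hNx : N x = (s - t) • a := by
    rw [hNapp, ← hs, ← ht, sub_smul]
  have hNa0 : N a = 0 := by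
    by_cases hst : s - t = 0
    · -- then N x = 0, and N x = t • N a
      have : t • N a = 0 := by
        rw [← map_smul, ht, hNx, hst, zero_smul]
      rcases smul_eq_zero.mp this with h | h
      · exact absurd h ht0
      · exact h
    · have : (s - t) • N a = 0 := by
        have := hN2 x
        rw [hNx, map_smul] at this
        exact this
      rcases smul_eq_zero.mp this with h | h
      · exact absurd h hst
      · exact h
  -- N kills A ⊔ B
  have hNAB : ∀ y ∈ A ⊔ B, N y = 0 := by
    intro y hy
    obtain ⟨p, hp, q, hq, rfl⟩ := Submodule.mem_sup.mp hy
    rw [hA] at hp; rw [hB] at hq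
    obtain ⟨r, rfl⟩ := Submodule.mem_span_singleton.mp hp
    obtain ⟨w, rfl⟩ := Submodule.mem_span_singleton.mp hq
    rw [map_add, map_smul, map_smul, hNa0, hNc0, smul_zero, smul_zero, add_zero]
  -- conclude N = 0
  have hNzero : ∀ x : U, N x = 0 := by
    intro y
    set z : U ⧸ (A ⊔ B) := Submodule.Quotient.mk y with hz
    have hord : 0 < addOrderOf z := by
      have : Finite (U ⧸ (A ⊔ B)) := hfin
      exact addOrderOf_pos z
    have hmem : (addOrderOf z) • y ∈ A ⊔ B := by
      rw [← Submodule.Quotient.mk_eq_zero]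
      have : ((addOrderOf z) • y : U) = (addOrderOf z) • y := rfl
      rw [Submodule.Quotient.mk_smul]
      · exact addOrderOf_nsmul_eq_zero z
    have hNy : (addOrderOf z : ℤ_[2]) • N y = 0 := by
      have := hNAB _ hmem
      rw [map_nsmul] at this
      rw [Nat.cast_smul_eq_nsmul]
      exact this
    rcases smul_eq_zero.mp hNy with h | h
    · exfalso
      have : (addOrderOf z : ℤ_[2]) ≠ 0 := Nat.cast_ne_zero.mpr hord.ne'
      exact this h
    · exact h
  ext x
  have := hNzero x
  rw [hNapp, sub_eq_zero] at this
  simpa using this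
end

section
/- Let U be a free ℤ₂-module of rank 2 and β a ℤ₂-linear automorphism of U with β ≠ id and (β - id)² = 0. Let A ⊆ U be a rank-1 free submodule such that β does not preserve any nonzero submodule of A. Then β(A) ∩ A = {0}. -/
theorem stmt_5 (U : Type*) [AddCommGroup U] [Module ℤ_[2] U]
    [Module.Free ℤ_[2] U] [Module.Finite ℤ_[2] U]
    (hrk : Module.finrank ℤ_[2] U = 2)
    (β : U ≃ₗ[ℤ_[2]] U) (hβ : β ≠ 1)
    (hsq : ((β : Module.End ℤ_[2] U) - 1) ^ 2 = 0)
    (a : U) (ha : a ≠ 0) (A : Submodule ℤ_[2] U)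
    (hA : A = Submodule.span ℤ_[2] {a})
    (hstab : ∀ A' : Submodule ℤ_[2] U, A' ≤ A → A' ≠ ⊥ →
      A'.map (β : U →ₗ[ℤ_[2]] U) ≠ A') :
    A.map (β : U →ₗ[ℤ_[2]] U) ⊓ A = ⊥ := by
  have hAne : A ≠ ⊥ := by
    rw [hA]
    simpa [Submodule.span_singleton_eq_bot] using ha
  -- β² a = 2 β a - a
  have hββ : β (β a) = (2:ℤ_[2]) • β a - a := by
    have h := LinearMap.congr_fun hsq a
    simp only [pow_two, Module.End.mul_apply, LinearMap.sub_apply, Module.End.one_apply,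
      LinearMap.zero_apply, LinearEquiv.coe_coe, map_sub] at h
    have h2 : β (β a) - ((2:ℤ_[2]) • β a - a) = 0 := by
      rw [two_smul, ← h]; abel
    exact eq_of_sub_eq_zero h2
  have key : ∀ t : ℤ_[2], β a = t • a → False := by
    intro t ht
    have h1 : ((2:ℤ_[2]) * t) • a - a = (t * t) • a := by
      have : β (β a) = (t * t) • a := by rw [ht, map_smul, ht, smul_smul]
      rw [hββ, ht, smul_smul] at this
      exact this
    have h2 : ((2 : ℤ_[2]) * t - t * t - 1) • a = 0 := by
      rw [sub_smul, sub_smul, one_smul, ← h1]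
      abel
    have h3 : (2 : ℤ_[2]) * t - t * t - 1 = 0 :=
      (smul_eq_zero.mp h2).resolve_right ha
    have h4 : (t - 1) ^ 2 = 0 := by linear_combination -h3
    have ht1 : t = 1 := by
      have h5 : t - 1 = 0 := pow_eq_zero_iff (two_ne_zero) |>.mp h4
      linear_combination h5
    rw [ht1, one_smul] at ht
    apply hstab A le_rfl hAne
    rw [hA, Submodule.map_span, Set.image_singleton]
    simp only [LinearEquiv.coe_coe, ht]
  by_contra hne
  obtain ⟨x, hx, hx0⟩ := Submodule.exists_mem_ne_zero_of_ne_bot hne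
  rw [Submodule.mem_inf] at hx
  obtain ⟨hx1, hx2⟩ := hx
  rw [hA, Submodule.mem_span_singleton] at hx2
  obtain ⟨y, hy, hyx⟩ := Submodule.mem_map.mp hx1
  rw [hA, Submodule.mem_span_singleton] at hy
  obtain ⟨c, rfl⟩ := hy
  obtain ⟨d, hd⟩ := hx2
  have hd0 : d ≠ 0 := by rintro rfl; rw [zero_smul] at hd; exact hx0 hd.symm
  have hcd : c • β a = d • a := by
    rw [hd]
    simpa [map_smul] using hyx
  have hc0 : c ≠ 0 := by
    rintro rfl
    rw [zero_smul] at hcd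
    exact hd0 ((smul_eq_zero.mp hcd.symm).resolve_right ha)
  rcases (ValuationRing.dvd_total c d) with ⟨t, rfl⟩ | ⟨s, rfl⟩
  · apply key t
    have : c • β a = c • (t • a) := by rw [hcd, smul_smul]
    exact smul_right_injective U hc0 this
  · have hs : s • β a = a := by
      have : d • (s • β a) = d • a := by rw [smul_smul]; exact hcd
      exact smul_right_injective U hd0 this
    apply key ((2:ℤ_[2]) - s)
    have h1 : s • β (β a) = β a := by rw [← map_smul, hs]
    rw [hββ, smul_sub, smul_smul, mul_comm, ← smul_smul, hs] at h1
    rw [← h1, sub_smul]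
end
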